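/- Let 𝔥 ⊆ End(ℂⁿ) be a complex linear subspace of diagonal matrices of dimension d+1 ≤ n−1 such that every nonzero λ ∈ 𝔥 has rank ≥ 2. Suppose ξ = Σ_{j,k,p} c_p^{jk} z_j z_k ∂/∂z_p (with c_p^{jk} = c_p^{kj}) is a quadratic vector field such that for every r, the bracket [∂/∂z_r, ξ] = 2 Σ_{k,p} c_p^{kr} z_k ∂/∂z_p lies in {λz ∂/∂z : λ ∈ 𝔥}. Then ξ = 0. -/
import Mathlib


/-- Let `𝔥 ⊆ End(ℂⁿ)` be a complex subspace of diagonal matrices of dimension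
`d+1 ≤ n−1` such that every nonzero `λ ∈ 𝔥` has rank `≥ 2`. If the quadratic vector field
`ξ = Σ c_p^{jk} z_j z_k ∂/∂z_p` (`c_p^{jk} = c_p^{kj}`) is such that for every `r` the
bracket `[∂/∂z_r, ξ] = 2 Σ c_p^{kr} z_k ∂/∂z_p` (a linear field with matrix
`(2 c_p^{kr})_{p,k}`) lies in `{λz ∂/∂z : λ ∈ 𝔥}`, then `ξ = 0`. -/
theorem stmt_14 (n d : ℕ) (hd : d + 2 ≤ n)
    (𝔥 : Submodule ℂ (Matrix (Fin n) (Fin n) ℂ))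
    (hdim : Module.finrank ℂ ↥𝔥 = d + 1)
    (hdiag : ∀ A ∈ 𝔥, ∀ j k, j ≠ k → A j k = 0)
    (hrank : ∀ A ∈ 𝔥, A ≠ 0 → 2 ≤ A.rank)
    (c : Fin n → Fin n → Fin n → ℂ)
    (hsymm : ∀ p j k, c p j k = c p k j)
    (hbr : ∀ r : Fin n, (Matrix.of fun p k : Fin n => 2 * c p k r) ∈ 𝔥) :
    c = 0 := by
  -- off-diagonal vanishing: c p k r = 0 for p ≠ k
  have h1 : ∀ p k r : Fin n, p ≠ k → c p k r = 0 := by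
    intro p k r hpk
    have := hdiag _ (hbr r) p k hpk
    simpa using this
  -- diagonal, p ≠ r
  have h2 : ∀ p r : Fin n, p ≠ r → c p p r = 0 := by
    intro p r hpr
    rw [hsymm]
    exact h1 p r p hpr
  -- remaining: c r r r = 0
  have h3 : ∀ r : Fin n, c r r r = 0 := by
    intro r
    by_contra hc
    set A : Matrix (Fin n) (Fin n) ℂ := Matrix.of fun p k : Fin n => 2 * c p k r with hA
    have hAd : A = Matrix.diagonal (fun p => 2 * c p p r) := by
      ext p k
      by_cases hpk : p = k
      · subst hpk; simp [hA]
      · simp [hA, Matrix.diagonal_apply_ne _ hpk, h1 p k r hpk]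
    have hA0 : A ≠ 0 := by
      intro h
      have : A r r = 0 := by rw [h]; rfl
      simp [hA] at this
      exact hc this
    have h2le := hrank A (hbr r) hA0
    have hle : A.rank ≤ 1 := by
      classical
      rw [hAd, Matrix.rank_diagonal]
      refine Fintype.card_le_one_iff.mpr ?_
      rintro ⟨a, ha⟩ ⟨b, hb⟩
      have har : a = r := by
        by_contra h; exact ha (by simp [h2 a r h])
      have hbr' : b = r := by
        by_contra h; exact hb (by simp [h2 b r h])
      simp [har, hbr']
    omega
  funext p j k
  simp only [Pi.zero_apply]
  by_cases hpj : p = j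
  · by_cases hjk : j = k
    · subst hpj; subst hjk; exact h3 p
    · subst hpj; exact (hsymm p p k).trans (h1 p k p hjk)
  · exact h1 p j k hpj
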